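/- For every constant integer i ≥ 1 and every constant c > 1, c^{log*(N)} = o(log^{(i)}(N)) as N → ∞; that is, for all ε > 0 there exists N₀ such that for all N ≥ N₀, c^{log*(N)} ≤ ε · log₂^{(i)}(N). -/

import Mathlib

noncomputable def iterLog : ℕ → ℝ → ℝ
  | 0, x => x
  | (i + 1), x => Real.logb 2 (iterLog i x)

noncomputable def logStar (N : ℕ) : ℕ := sInf {i : ℕ | iterLog i (N : ℝ) ≤ 1}

/-- tower function -/
noncomputable def tw : ℕ → ℝ
  | 0 => 1
  | n+1 => (2:ℝ) ^ (tw n)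

lemma iterLog_succ_comm (j : ℕ) (x : ℝ) :
    iterLog (j+1) x = iterLog j (Real.logb 2 x) := by
  induction j with
  | zero => rfl
  | succ j ih =>
      show Real.logb 2 (iterLog (j+1) x) = Real.logb 2 (iterLog j (Real.logb 2 x))
      rw [ih]

lemma one_le_tw : ∀ j, 1 ≤ tw j := by
  intro j
  induction j with
  | zero => exact le_refl _
  | succ j ih =>
      show (1:ℝ) ≤ (2:ℝ) ^ (tw j)
      calc (1:ℝ) = (2:ℝ) ^ (0:ℝ) := by simp
        _ ≤ (2:ℝ) ^ (tw j) :=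
          Real.rpow_le_rpow_of_exponent_le one_le_two (by linarith)

lemma lt_rpow_self {t : ℝ} (ht : 0 < t) : t < (2:ℝ) ^ t := by
  rw [Real.rpow_def_of_pos (by norm_num)]
  set a := Real.log 2 * t / 2 with ha
  have h2 : Real.log 2 * t = 2 * a := by ring
  have hl2 : (0.6931471803:ℝ) < Real.log 2 := Real.log_two_gt_d9
  have hap : 0 < a := by positivity
  have he : a + 1 ≤ Real.exp a := Real.add_one_le_exp a
  have hx : Real.exp (2 * a) = Real.exp a * Real.exp a := by
    rw [← Real.exp_add]; ring_nf
  rw [h2, hx]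
  have h4a : 4 * a ≤ Real.exp a * Real.exp a := by
    nlinarith [Real.exp_pos a, sq_nonneg (a - 1)]
  -- t = 2a / log 2 < 4a since log 2 > 1/2
  have : t * Real.log 2 = 2 * a := by rw [← h2]; ring
  nlinarith

lemma tw_lt_succ (j : ℕ) : tw j < tw (j+1) :=
  lt_rpow_self (lt_of_lt_of_le one_pos (one_le_tw j))

lemma tw_mono : StrictMono tw := strictMono_nat_of_lt_succ tw_lt_succ

lemma exists_iterLog_le : ∀ (n : ℕ) (x : ℝ), x ≤ n → ∃ j, iterLog j x ≤ 1 := by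
  intro n
  induction n with
  | zero =>
      intro x hx
      exact ⟨0, by simpa [iterLog] using hx.trans (by norm_num)⟩
  | succ n ih =>
      intro x hx
      by_cases h1 : x ≤ 1
      · exact ⟨0, h1⟩
      push_neg at h1
      have hlog : Real.logb 2 x ≤ (n : ℝ) := by
        have h2n : x ≤ (2:ℝ) ^ ((n:ℕ):ℝ) := by
          rw [Real.rpow_natCast]
          calc x ≤ ((n+1:ℕ):ℝ) := hx
            _ ≤ ((2^n : ℕ):ℝ) := by exact_mod_cast (Nat.lt_two_pow_self (n := n))
            _ = (2:ℝ)^(n:ℕ) := by push_cast; ring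
        calc Real.logb 2 x ≤ Real.logb 2 ((2:ℝ)^((n:ℕ):ℝ)) :=
              Real.logb_le_logb_of_le (by norm_num) (by linarith) h2n
          _ = (n:ℝ) := Real.logb_rpow (by norm_num) (by norm_num)
      obtain ⟨j, hj⟩ := ih (Real.logb 2 x) hlog
      exact ⟨j+1, by rw [iterLog_succ_comm]; exact hj⟩

lemma one_lt_iterLog : ∀ (j : ℕ) (x : ℝ), tw j < x → 1 < iterLog j x := by
  intro j
  induction j with
  | zero => intro x hx; exact hx
  | succ j ih =>
      intro x hx
      have hpos : (0:ℝ) < (2:ℝ) ^ (tw j) := Real.rpow_pos_of_pos (by norm_num) _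
      have hxpos : 0 < x := lt_trans hpos hx
      have hlog : tw j < Real.logb 2 x := by
        have := Real.logb_lt_logb (by norm_num : (1:ℝ) < 2) hpos hx
        rwa [Real.logb_rpow (by norm_num) (by norm_num)] at this
      rw [iterLog_succ_comm]
      exact ih _ hlog

lemma tw_lt_iterLog {N : ℝ} {k : ℕ} (h : ∀ j, j < k → 1 < iterLog j N) :
    ∀ d, d < k → tw d < iterLog (k - 1 - d) N := by
  intro d
  induction d with
  | zero => intro hd; exact h (k-1) (by omega)
  | succ d ih =>
      intro hd
      have hih := ih (by omega)
      have hk : k - 1 - d = (k - 2 - d) + 1 := by omega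
      rw [hk] at hih
      have hy : 1 < iterLog (k - 2 - d) N := h _ (by omega)
      have hypos : 0 < iterLog (k - 2 - d) N := by linarith
      have : iterLog ((k-2-d)+1) N = Real.logb 2 (iterLog (k-2-d) N) := rfl
      rw [this] at hih
      have : (2:ℝ) ^ (tw d) < (2:ℝ) ^ (Real.logb 2 (iterLog (k-2-d) N)) :=
        Real.rpow_lt_rpow_of_exponent_lt (by norm_num) hih
      rw [Real.rpow_logb (by norm_num) (by norm_num) hypos] at this
      have hk2 : k - 1 - (d+1) = k - 2 - d := by omega
      rw [hk2]
      exact this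

lemma tw_ge : ∀ p : ℕ, ((2^(2^p) : ℕ) : ℝ) ≤ tw (p+2) := by
  intro p
  induction p with
  | zero =>
      have h1 : tw 1 = 2 := by
        show (2:ℝ) ^ (1:ℝ) = 2
        rw [Real.rpow_one]
      have h2 : tw 2 = 4 := by
        show (2:ℝ) ^ (tw 1) = 4
        rw [h1, show (2:ℝ) = ((2:ℕ):ℝ) by norm_num, Real.rpow_natCast]
        norm_num
      rw [h2]; norm_num
  | succ p ih =>
      show ((2^(2^(p+1)) : ℕ) : ℝ) ≤ (2:ℝ) ^ (tw (p+2))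
      have h1 : ((2^(2^(p+1)) : ℕ) : ℝ) = (2:ℝ) ^ (((2^(p+1):ℕ)):ℝ) := by
        rw [Real.rpow_natCast]; push_cast; ring
      rw [h1]
      apply Real.rpow_le_rpow_of_exponent_le one_le_two
      calc (((2^(p+1):ℕ)):ℝ) ≤ ((2^(2^p) : ℕ) : ℝ) := by
            have : (2:ℕ)^(p+1) ≤ 2^(2^p) :=
              Nat.pow_le_pow_right (by norm_num) (by exact (Nat.lt_two_pow_self (n := p)))
            exact_mod_cast this
        _ ≤ tw (p+2) := ih

lemma sq_le_two_pow : ∀ j : ℕ, 4 ≤ j → j * j ≤ 2 ^ j := by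
  intro j
  induction j with
  | zero => omega
  | succ j ih =>
      intro hj
      rcases Nat.lt_or_ge j 4 with h | h
      · have hj3 : j = 3 := by omega
        subst hj3; norm_num
      · have := ih h
        have h2 : (j+1)*(j+1) ≤ 2*(j*j) := by nlinarith
        calc (j+1)*(j+1) ≤ 2*(j*j) := h2
          _ ≤ 2 * 2^j := by omega
          _ = 2^(j+1) := by ring

theorem stmt_7 (i : ℕ) (hi : 1 ≤ i) (c : ℝ) (hc : 1 < c) :
    ∀ ε : ℝ, 0 < ε → ∃ N₀ : ℕ, ∀ N : ℕ, N₀ ≤ N →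
      c ^ logStar N ≤ ε * iterLog i (N : ℝ) := by
  intro ε hε
  obtain ⟨b, hb⟩ := pow_unbounded_of_one_lt c (by norm_num : (1:ℝ) < 2)
  obtain ⟨a, ha⟩ := pow_unbounded_of_one_lt (1/ε) (by norm_num : (1:ℝ) < 2)
  set C : ℕ := b + a + b * (i + 3) with hC
  set J : ℕ := max C 4 with hJ
  set K : ℕ := J + i + 3 with hK
  refine ⟨⌈tw (K-1)⌉₊ + 1, ?_⟩
  intro N hN
  have hNtw : tw (K-1) < (N:ℝ) := by
    have h1 : tw (K-1) ≤ (⌈tw (K-1)⌉₊ : ℝ) := Nat.le_ceil _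
    have h2 : ((⌈tw (K-1)⌉₊ + 1 : ℕ) : ℝ) ≤ (N:ℝ) := by exact_mod_cast hN
    push_cast at h2
    linarith
  set S : Set ℕ := {j : ℕ | iterLog j (N : ℝ) ≤ 1} with hS
  have hSne : S.Nonempty := by
    obtain ⟨j, hj⟩ := exists_iterLog_le N (N:ℝ) (le_refl _)
    exact ⟨j, hj⟩
  set k : ℕ := logStar N with hk
  have hkmem : iterLog k (N:ℝ) ≤ 1 := Nat.sInf_mem hSne
  have hlt : ∀ j, j < k → 1 < iterLog j (N:ℝ) := by
    intro j hj
    have := Nat.notMem_of_lt_sInf (s := S) hj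
    simp only [hS, Set.mem_setOf_eq] at this
    linarith
  have hkK : K ≤ k := by
    by_contra hcon
    push_neg at hcon
    have hkK1 : k ≤ K - 1 := by omega
    have : tw k < (N:ℝ) := lt_of_le_of_lt (tw_mono.monotone hkK1) hNtw
    have := one_lt_iterLog k (N:ℝ) this
    linarith
  -- main bound
  set m : ℕ := k - 1 - i with hm
  have him : tw m < iterLog i (N:ℝ) := by
    have := tw_lt_iterLog hlt (k - 1 - i) (by omega)
    have heq : k - 1 - (k - 1 - i) = i := by omega
    rwa [heq] at this
  set j : ℕ := m - 2 with hj2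
  have hjJ : J ≤ j := by omega
  have hmj : m = j + 2 := by omega
  have hkj : k = j + i + 3 := by omega
  -- numeric inequality: a + b * k ≤ 2 ^ j
  have hnat : a + b * k ≤ 2 ^ j := by
    have h4 : 4 ≤ j := le_trans (le_max_right C 4) hjJ
    have hCj : C ≤ j := le_trans (le_max_left C 4) hjJ
    have hsq : j * j ≤ 2 ^ j := sq_le_two_pow j h4
    have : a + b * k = a + b * (j + i + 3) := by rw [hkj]
    have hle : a + b * (j + i + 3) ≤ C * j := by
      have h1 : 1 ≤ j := by omega
      calc a + b * (j + i + 3) = b * j + (a + b * (i+3)) := by ring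
        _ ≤ b * j + (a + b * (i+3)) * j := by
            have := Nat.le_mul_of_pos_right (a + b*(i+3)) (show 0 < j by omega)
            omega
        _ = C * j := by rw [hC]; ring
    calc a + b * k = a + b * (j+i+3) := by rw [hkj]
      _ ≤ C * j := hle
      _ ≤ j * j := Nat.mul_le_mul_right j hCj
      _ ≤ 2 ^ j := hsq
  -- assemble
  have hcpos : (0:ℝ) ≤ c := by linarith
  have step1 : c ^ k ≤ ((2:ℝ)^b) ^ k := pow_le_pow_left₀ hcpos hb.le k
  have step2 : ((2:ℝ)^b) ^ k = ((2^(b*k) : ℕ) : ℝ) := by push_cast; rw [← pow_mul]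
  have step3 : ((2^(b*k) : ℕ) : ℝ) ≤ ε * ((2^(2^j) : ℕ) : ℝ) := by
    have h2a : (1:ℝ) ≤ ε * (2:ℝ)^a := by
      rw [div_lt_iff₀ hε] at ha
      · nlinarith
    have hsplit : ((2^(2^j) : ℕ) : ℝ) = ((2^a : ℕ):ℝ) * ((2^(b*k) : ℕ):ℝ) *
        ((2^(2^j - (a + b*k)) : ℕ):ℝ) := by
      push_cast
      rw [← pow_add, ← pow_add]
      congr 1
      omega
    rw [hsplit]
    have hrest : (1:ℝ) ≤ ((2^(2^j - (a + b*k)) : ℕ):ℝ) := by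
      exact_mod_cast Nat.one_le_two_pow
    have hpk : (0:ℝ) < ((2^(b*k) : ℕ):ℝ) := by positivity
    push_cast at *
    nlinarith [mul_le_mul_of_nonneg_right h2a hpk.le,
      mul_le_mul_of_nonneg_left hrest
        (by positivity : (0:ℝ) ≤ ε * 2^a * 2^(b*k))]
  have step4 : ε * ((2^(2^j) : ℕ) : ℝ) ≤ ε * tw m := by
    apply mul_le_mul_of_nonneg_left _ hε.le
    rw [hmj]
    exact tw_ge j
  have step5 : ε * tw m ≤ ε * iterLog i (N:ℝ) :=
    mul_le_mul_of_nonneg_left him.le hε.le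
  calc c ^ k ≤ ((2:ℝ)^b)^k := step1
    _ = ((2^(b*k):ℕ):ℝ) := step2
    _ ≤ ε * ((2^(2^j):ℕ):ℝ) := step3
    _ ≤ ε * tw m := step4
    _ ≤ ε * iterLog i (N:ℝ) := step5
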